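/- arXiv:2302.04458 — 3 statements merged into one kernel-verified Lean document; each statement's English description precedes it below -/
import Mathlib

section
/- Let (A,B) be a Pythagorean pair on 𝔥 and ξ ∈ 𝔥. Then ‖φ(w)ξ‖ tends to 0 along the Fréchet filter of the free monoid (i.e. for every ε>0, all but finitely many words w satisfy ‖φ(w)ξ‖ < ε) if and only if lim_{n→∞} ‖p_n ξ‖ = 0 for every ray p. -/
open Filter Topology

noncomputable def pythWord {H : Type*} [NormedAddCommGroup H] [InnerProductSpace ℂ H]
    (A B : H →L[ℂ] H) (w : List Bool) : H →L[ℂ] H :=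
  (w.map (fun x => if x then B else A)).prod

/-- The operator `p_n` given by composing the operators of the first `n` letters of the
ray `p` (first letter applied first). `false` stands for `a ↦ A`, `true` for `b ↦ B`. -/
noncomputable def rayOp {H : Type*} [NormedAddCommGroup H] [InnerProductSpace ℂ H]
    (A B : H →L[ℂ] H) (p : ℕ → Bool) (n : ℕ) : H →L[ℂ] H :=
  pythWord A B ((List.range n).reverse.map p)

section Aux

variable {H : Type*} [NormedAddCommGroup H] [InnerProductSpace ℂ H] [CompleteSpace H]
  (A B : H →L[ℂ] H)

lemma pythWord_cons (x : Bool) (w : List Bool) :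
    pythWord A B (x :: w) = (if x then B else A) * pythWord A B w := by
  simp [pythWord]

lemma pyth_norm_sq
    (hpyth : (ContinuousLinearMap.adjoint A).comp A
      + (ContinuousLinearMap.adjoint B).comp B = 1) (η : H) :
    ‖A η‖ ^ 2 + ‖B η‖ ^ 2 = ‖η‖ ^ 2 := by
  have h := congrArg (fun T : H →L[ℂ] H => (inner ℂ (T η) η : ℂ)) hpyth
  simp only [ContinuousLinearMap.add_apply, ContinuousLinearMap.comp_apply,
    ContinuousLinearMap.one_apply, inner_add_left,
    ContinuousLinearMap.adjoint_inner_left] at h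
  rw [inner_self_eq_norm_sq_to_K, inner_self_eq_norm_sq_to_K,
    inner_self_eq_norm_sq_to_K] at h
  exact_mod_cast h

lemma norm_pythWord_cons_le
    (hpyth : (ContinuousLinearMap.adjoint A).comp A
      + (ContinuousLinearMap.adjoint B).comp B = 1) (ξ : H) (x : Bool) (w : List Bool) :
    ‖pythWord A B (x :: w) ξ‖ ≤ ‖pythWord A B w ξ‖ := by
  set η := pythWord A B w ξ with hη
  have hsq := pyth_norm_sq A B hpyth η
  have hx : pythWord A B (x :: w) ξ = (if x then B else A) η := by
    rw [pythWord_cons]; rfl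
  have h2 : ‖pythWord A B (x :: w) ξ‖ ^ 2 ≤ ‖η‖ ^ 2 := by
    rw [hx]
    cases x <;> simp <;> nlinarith [sq_nonneg ‖A η‖, sq_nonneg ‖B η‖]
  have := Real.sqrt_le_sqrt h2
  rwa [Real.sqrt_sq (norm_nonneg _), Real.sqrt_sq (norm_nonneg _)] at this

lemma norm_pythWord_append_le
    (hpyth : (ContinuousLinearMap.adjoint A).comp A
      + (ContinuousLinearMap.adjoint B).comp B = 1) (ξ : H) (v w : List Bool) :
    ‖pythWord A B (v ++ w) ξ‖ ≤ ‖pythWord A B w ξ‖ := by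
  induction v with
  | nil => simp
  | cons x v ih =>
    calc ‖pythWord A B ((x :: v) ++ w) ξ‖ ≤ ‖pythWord A B (v ++ w) ξ‖ :=
          norm_pythWord_cons_le A B hpyth ξ x (v ++ w)
      _ ≤ _ := ih

end Aux

theorem pythagorean_pair_frechet_iff_all_rays
    {H : Type*} [NormedAddCommGroup H] [InnerProductSpace ℂ H] [CompleteSpace H]
    (A B : H →L[ℂ] H)
    (hpyth : (ContinuousLinearMap.adjoint A).comp A
      + (ContinuousLinearMap.adjoint B).comp B = 1)
    (ξ : H) :
    (∀ ε : ℝ, 0 < ε → {w : List Bool | ε ≤ ‖pythWord A B w ξ‖}.Finite) ↔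
      ∀ p : ℕ → Bool, Tendsto (fun n => ‖rayOp A B p n ξ‖) atTop (nhds 0) := by
  constructor
  · intro hfin p
    rw [Metric.tendsto_atTop]
    intro ε hε
    have hf := hfin ε hε
    have hinj : Function.Injective (fun n : ℕ => (List.range n).reverse.map p) := by
      intro m n h
      have := congrArg List.length h
      simpa using this
    have hsub : {n : ℕ | ε ≤ ‖rayOp A B p n ξ‖}
        ⊆ (fun n : ℕ => (List.range n).reverse.map p) ⁻¹'
          {w : List Bool | ε ≤ ‖pythWord A B w ξ‖} := fun n hn => hn
    have hnf : {n : ℕ | ε ≤ ‖rayOp A B p n ξ‖}.Finite :=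
      (hf.preimage hinj.injOn).subset hsub
    obtain ⟨N, hN⟩ := hnf.bddAbove
    refine ⟨N + 1, fun n hn => ?_⟩
    rw [Real.dist_eq, sub_zero, abs_of_nonneg (norm_nonneg _)]
    by_contra h
    push_neg at h
    have : n ≤ N := hN h
    omega
  · intro hray ε hε
    by_contra hinf
    set S : Set (List Bool) := {w : List Bool | ε ≤ ‖pythWord A B w ξ‖} with hSdef
    have hS : S.Infinite := hinf
    -- S is closed under suffixes
    have hsufclosed : ∀ w u : List Bool, w <:+ u → u ∈ S → w ∈ S := by
      rintro w u ⟨v, rfl⟩ hu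
      exact le_trans hu (norm_pythWord_append_le A B hpyth ξ v w)
    -- König step
    have step : ∀ w : List Bool, {u | u ∈ S ∧ w <:+ u}.Infinite →
        ∃ x : Bool, {u | u ∈ S ∧ (x :: w) <:+ u}.Infinite := by
      intro w hw
      by_contra hcon
      push_neg at hcon
      have hfalse := hcon false
      have htrue := hcon true
      have hcover : {u | u ∈ S ∧ w <:+ u}
          ⊆ ({u | u ∈ S ∧ (false :: w) <:+ u} ∪ {u | u ∈ S ∧ (true :: w) <:+ u}) ∪ {w} := by
        rintro u ⟨hu, v, rfl⟩
        rcases eq_or_ne v [] with rfl | hv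
        · right; simp
        · left
          obtain ⟨v', x, rfl⟩ := (List.eq_nil_or_concat v).resolve_left hv
          have hx : (x :: w) <:+ (v'.concat x ++ w) := ⟨v', by simp⟩
          cases x
          · exact Or.inl ⟨hu, hx⟩
          · exact Or.inr ⟨hu, hx⟩
      exact hw (((hfalse.union htrue).union (Set.finite_singleton w)).subset hcover)
    -- choice of next bit
    classical
    let next : List Bool → Bool := fun w =>
      if {u | u ∈ S ∧ (true :: w) <:+ u}.Infinite then true else false
    have hnext : ∀ w : List Bool, {u | u ∈ S ∧ w <:+ u}.Infinite →
        {u | u ∈ S ∧ (next w :: w) <:+ u}.Infinite := by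
      intro w hw
      by_cases h : {u | u ∈ S ∧ (true :: w) <:+ u}.Infinite
      · have hnw : next w = true := if_pos h
        rw [hnw]; exact h
      · obtain ⟨x, hx⟩ := step w hw
        have hnw : next w = false := if_neg h
        rw [hnw]
        cases x
        · exact hx
        · exact absurd hx h
    -- the chain of words
    let chain : ℕ → List Bool := fun n => Nat.rec [] (fun _ w => next w :: w) n
    have hchain_succ : ∀ n, chain (n + 1) = next (chain n) :: chain n := fun n => rfl
    have hinv : ∀ n, {u | u ∈ S ∧ chain n <:+ u}.Infinite := by
      intro n
      induction n with
      | zero =>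
        have hsub : S ⊆ {u | u ∈ S ∧ chain 0 <:+ u} := fun u hu =>
          Set.mem_setOf.mpr ⟨hu, by simp [chain]⟩
        exact hS.mono hsub
      | succ n ih => exact hnext (chain n) ih
    have hmem : ∀ n, chain n ∈ S := by
      intro n
      obtain ⟨u, hu⟩ := (hinv n).nonempty
      exact hsufclosed _ _ hu.2 hu.1
    -- the ray
    set p : ℕ → Bool := fun n => next (chain n) with hp
    have hchain_eq : ∀ n, chain n = (List.range n).reverse.map p := by
      intro n
      induction n with
      | zero => simp [chain]
      | succ n ih =>
        rw [hchain_succ, List.range_succ]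
        simp [ih, hp]
    have hlow : ∀ n, ε ≤ ‖rayOp A B p n ξ‖ := by
      intro n
      have := hmem n
      rwa [hchain_eq n] at this
    obtain ⟨N, hN⟩ := (Metric.tendsto_atTop.mp (hray p)) ε hε
    have := hN N le_rfl
    rw [Real.dist_eq, sub_zero, abs_of_nonneg (norm_nonneg _)] at this
    exact absurd (hlow N) (not_le.mpr this)
end

section
/- Let (A,B) be a Pythagorean pair on a finite-dimensional complex Hilbert space 𝔥. Then either ‖φ(w)‖ tends to 0 along the Fréchet filter of the free monoid, or there exists a nonzero vector ξ ∈ 𝔥 and a ray p such that ‖p_n ξ‖ = ‖ξ‖ for all n (equivalently lim_n ‖p_n ξ‖ = ‖ξ‖). -/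
open Filter Topology

namespace PythAux

variable {H : Type*} [NormedAddCommGroup H] [InnerProductSpace ℂ H]
variable (A B : H →L[ℂ] H)

lemma pythWord_nil : pythWord A B [] = 1 := rfl

lemma pythWord_cons (x : Bool) (w : List Bool) :
    pythWord A B (x :: w) = (if x then B else A) * pythWord A B w := by
  simp [pythWord]

lemma pythWord_append (u v : List Bool) :
    pythWord A B (u ++ v) = pythWord A B u * pythWord A B v := by
  simp [pythWord]

lemma rayOp_zero (p : ℕ → Bool) : rayOp A B p 0 = 1 := rfl

lemma rayOp_succ (p : ℕ → Bool) (n : ℕ) :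
    rayOp A B p (n+1) = (if p n then B else A) * rayOp A B p n := by
  rw [rayOp, rayOp, List.range_succ]
  simp [pythWord_cons]

lemma rayOp_shift (p : ℕ → Bool) (n : ℕ) :
    rayOp A B p (n+1) = rayOp A B (fun i => p (i+1)) n * (if p 0 then B else A) := by
  rw [rayOp, rayOp, List.range_succ_eq_map]
  simp [pythWord, Function.comp_def]

section contraction

variable {A B}
variable (hA : ∀ ξ : H, ‖A ξ‖ ≤ ‖ξ‖) (hB : ∀ ξ : H, ‖B ξ‖ ≤ ‖ξ‖)
include hA hB

lemma norm_pythWord_apply_le (w : List Bool) (ξ : H) : ‖pythWord A B w ξ‖ ≤ ‖ξ‖ := by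
  induction w with
  | nil => simp [pythWord]
  | cons x w ih =>
    rw [pythWord_cons]
    calc ‖((if x then B else A) * pythWord A B w) ξ‖
        = ‖(if x then B else A) (pythWord A B w ξ)‖ := rfl
      _ ≤ ‖pythWord A B w ξ‖ := by cases x <;> simp [hA, hB]
      _ ≤ ‖ξ‖ := ih

lemma norm_pythWord_le_one (w : List Bool) : ‖pythWord A B w‖ ≤ 1 :=
  ContinuousLinearMap.opNorm_le_bound _ zero_le_one fun ξ => by
    simpa using norm_pythWord_apply_le hA hB w ξ

lemma norm_rayOp_apply_le (p : ℕ → Bool) (n : ℕ) (ξ : H) :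
    ‖rayOp A B p n ξ‖ ≤ ‖ξ‖ := norm_pythWord_apply_le hA hB _ ξ

lemma rayOp_apply_antitone (p : ℕ → Bool) (ξ : H) :
    Antitone fun n => ‖rayOp A B p n ξ‖ := by
  apply antitone_nat_of_succ_le
  intro n
  rw [rayOp_succ]
  calc ‖((if p n then B else A) * rayOp A B p n) ξ‖
      = ‖(if p n then B else A) (rayOp A B p n ξ)‖ := rfl
    _ ≤ ‖rayOp A B p n ξ‖ := by cases hpn : p n <;> simp [hA, hB]

end contraction


lemma pyth_norm_sq [CompleteSpace H] {A B : H →L[ℂ] H}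
    (hpyth : (ContinuousLinearMap.adjoint A).comp A
      + (ContinuousLinearMap.adjoint B).comp B = 1) (ξ : H) :
    ‖A ξ‖^2 + ‖B ξ‖^2 = ‖ξ‖^2 := by
  have h := congrArg (fun T : H →L[ℂ] H => inner ℂ (T ξ) ξ : (H →L[ℂ] H) → ℂ) hpyth
  simp only [ContinuousLinearMap.add_apply, ContinuousLinearMap.comp_apply,
    ContinuousLinearMap.one_apply, inner_add_left] at h
  rw [ContinuousLinearMap.adjoint_inner_left, ContinuousLinearMap.adjoint_inner_left,
    inner_self_eq_norm_sq_to_K, inner_self_eq_norm_sq_to_K, inner_self_eq_norm_sq_to_K] at h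
  exact_mod_cast h

lemma pyth_contraction_left [CompleteSpace H] {A B : H →L[ℂ] H}
    (hpyth : (ContinuousLinearMap.adjoint A).comp A
      + (ContinuousLinearMap.adjoint B).comp B = 1) (ξ : H) : ‖A ξ‖ ≤ ‖ξ‖ := by
  have h := pyth_norm_sq hpyth ξ
  nlinarith [norm_nonneg (A ξ), norm_nonneg (B ξ), norm_nonneg ξ, sq_nonneg (‖B ξ‖)]

lemma pyth_contraction_right [CompleteSpace H] {A B : H →L[ℂ] H}
    (hpyth : (ContinuousLinearMap.adjoint A).comp A
      + (ContinuousLinearMap.adjoint B).comp B = 1) (ξ : H) : ‖B ξ‖ ≤ ‖ξ‖ := by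
  have h := pyth_norm_sq hpyth ξ
  nlinarith [norm_nonneg (A ξ), norm_nonneg (B ξ), norm_nonneg ξ]


noncomputable def rInf (p : ℕ → Bool) (ξ : H) : ℝ := ⨅ n, ‖rayOp A B p n ξ‖

noncomputable def gSup (ξ : H) : ℝ := ⨆ p : ℕ → Bool, rInf A B p ξ

lemma bddBelow_rayOp_norms (p : ℕ → Bool) (ξ : H) :
    BddBelow (Set.range fun n => ‖rayOp A B p n ξ‖) :=
  ⟨0, by rintro x ⟨n, rfl⟩; exact norm_nonneg _⟩

lemma rInf_le (p : ℕ → Bool) (ξ : H) (n : ℕ) : rInf A B p ξ ≤ ‖rayOp A B p n ξ‖ :=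
  ciInf_le (bddBelow_rayOp_norms A B p ξ) n

lemma le_rInf {c : ℝ} (p : ℕ → Bool) (ξ : H) (h : ∀ n, c ≤ ‖rayOp A B p n ξ‖) :
    c ≤ rInf A B p ξ := le_ciInf h

lemma rInf_nonneg (p : ℕ → Bool) (ξ : H) : 0 ≤ rInf A B p ξ :=
  le_rInf A B p ξ fun n => norm_nonneg _

lemma rInf_le_norm (p : ℕ → Bool) (ξ : H) : rInf A B p ξ ≤ ‖ξ‖ := by
  simpa [rayOp_zero] using rInf_le A B p ξ 0

lemma bddAbove_rInf (ξ : H) : BddAbove (Set.range fun p : ℕ → Bool => rInf A B p ξ) :=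
  ⟨‖ξ‖, by rintro x ⟨p, rfl⟩; exact rInf_le_norm A B p ξ⟩

lemma rInf_le_gSup (p : ℕ → Bool) (ξ : H) : rInf A B p ξ ≤ gSup A B ξ :=
  le_ciSup (bddAbove_rInf A B ξ) p

lemma gSup_le {c : ℝ} (ξ : H) (h : ∀ p : ℕ → Bool, rInf A B p ξ ≤ c) :
    gSup A B ξ ≤ c := ciSup_le h

lemma gSup_nonneg (ξ : H) : 0 ≤ gSup A B ξ :=
  le_trans (rInf_nonneg A B (fun _ => false) ξ) (rInf_le_gSup A B _ ξ)

lemma gSup_le_norm (ξ : H) : gSup A B ξ ≤ ‖ξ‖ :=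
  gSup_le A B ξ fun p => rInf_le_norm A B p ξ

lemma rInf_smul (p : ℕ → Bool) (ξ : H) {r : ℝ} (hr : 0 ≤ r) :
    rInf A B p ((r : ℂ) • ξ) = r * rInf A B p ξ := by
  rw [rInf, rInf, Real.mul_iInf_of_nonneg hr]
  congr 1
  funext n
  rw [map_smul, norm_smul]
  simp [abs_of_nonneg hr]

lemma gSup_smul (ξ : H) {r : ℝ} (hr : 0 ≤ r) :
    gSup A B ((r : ℂ) • ξ) = r * gSup A B ξ := by
  rw [gSup, gSup, Real.mul_iSup_of_nonneg hr]
  congr 1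
  funext p
  exact rInf_smul A B p ξ hr

section contraction2

variable {A B}
variable (hA : ∀ ξ : H, ‖A ξ‖ ≤ ‖ξ‖) (hB : ∀ ξ : H, ‖B ξ‖ ≤ ‖ξ‖)
include hA hB

lemma rInf_shift (p : ℕ → Bool) (ξ : H) :
    rInf A B p ξ = rInf A B (fun i => p (i+1)) ((if p 0 then B else A) ξ) := by
  have key : ∀ n, ‖rayOp A B p (n+1) ξ‖
      = ‖rayOp A B (fun i => p (i+1)) n ((if p 0 then B else A) ξ)‖ := fun n => by
    rw [rayOp_shift]; rfl
  apply le_antisymm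
  · apply le_ciInf fun n => ?_
    rw [← key n]
    exact rInf_le A B p ξ (n+1)
  · apply le_ciInf fun n => ?_
    match n with
    | 0 =>
      have h1 : rInf A B (fun i => p (i+1)) ((if p 0 then B else A) ξ)
          ≤ ‖(if p 0 then B else A) ξ‖ := rInf_le_norm A B _ _
      have h2 : ‖(if p 0 then B else A) ξ‖ ≤ ‖ξ‖ := by cases hp : p 0 <;> simp [hA, hB]
      simpa [rayOp_zero] using h1.trans h2
    | Nat.succ m =>
      rw [key m]
      exact rInf_le A B _ _ m

lemma rInf_cons (b : Bool) (q : ℕ → Bool) (ξ : H) :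
    rInf A B (fun n => Nat.casesOn n b q) ξ = rInf A B q ((if b then B else A) ξ) := by
  rw [rInf_shift hA hB]
  rfl

lemma rInf_cons_false (q : ℕ → Bool) (ξ : H) :
    rInf A B (fun n => Nat.casesOn n false q) ξ = rInf A B q (A ξ) := by
  rw [rInf_cons hA hB]
  norm_num

lemma rInf_cons_true (q : ℕ → Bool) (ξ : H) :
    rInf A B (fun n => Nat.casesOn n true q) ξ = rInf A B q (B ξ) := by
  rw [rInf_cons hA hB]
  norm_num

lemma gSup_eq_max (ξ : H) :
    gSup A B ξ = max (gSup A B (A ξ)) (gSup A B (B ξ)) := by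
  apply le_antisymm
  · apply gSup_le A B ξ fun p => ?_
    rw [rInf_shift hA hB p ξ]
    cases hp : p 0 with
    | false =>
      simpa using le_max_of_le_left (rInf_le_gSup A B (fun i => p (i+1)) (A ξ))
    | true =>
      simpa using le_max_of_le_right (rInf_le_gSup A B (fun i => p (i+1)) (B ξ))
  · apply max_le
    · apply gSup_le A B (A ξ) fun q => ?_
      rw [← rInf_cons_false hA hB q ξ]
      exact rInf_le_gSup A B _ ξ
    · apply gSup_le A B (B ξ) fun q => ?_
      rw [← rInf_cons_true hA hB q ξ]
      exact rInf_le_gSup A B _ ξ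

lemma gSup_le_add (ξ η : H) : gSup A B ξ ≤ gSup A B η + ‖ξ - η‖ := by
  apply gSup_le A B ξ fun p => ?_
  have h1 : ∀ n, rInf A B p ξ - ‖ξ - η‖ ≤ ‖rayOp A B p n η‖ := fun n => by
    have h2 := rInf_le A B p ξ n
    have h3 : ‖rayOp A B p n ξ - rayOp A B p n η‖ ≤ ‖ξ - η‖ := by
      rw [← map_sub]
      exact norm_rayOp_apply_le hA hB p n (ξ - η)
    have h4 := norm_sub_norm_le (rayOp A B p n ξ) (rayOp A B p n η)
    linarith
  have h5 : rInf A B p ξ - ‖ξ - η‖ ≤ rInf A B p η := le_ciInf h1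
  have h6 := rInf_le_gSup A B p η
  linarith

lemma continuous_gSup : Continuous (gSup A B) := by
  have hl : LipschitzWith 1 (gSup A B) := by
    apply LipschitzWith.of_dist_le_mul fun ξ η => ?_
    rw [Real.dist_eq, dist_eq_norm, NNReal.coe_one, one_mul, abs_sub_le_iff]
    constructor
    · linarith [gSup_le_add hA hB ξ η]
    · have := gSup_le_add hA hB η ξ
      rw [norm_sub_rev] at this
      linarith
  exact hl.continuous

end contraction2


lemma continuous_rayOp_norm (k : ℕ) :
    Continuous fun p : ℕ → Bool => ‖rayOp A B p k‖ := by
  have hfac : (fun p : ℕ → Bool => ‖rayOp A B p k‖) =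
      (fun v : Fin k → Bool => ‖pythWord A B ((List.range k).reverse.map
        fun j => if h : j < k then v ⟨j, h⟩ else false)‖) ∘ (fun p (i : Fin k) => p i) := by
    funext p
    have hl : ((List.range k).reverse.map fun j => if h : j < k then p j else false)
        = (List.range k).reverse.map p := by
      apply List.map_congr_left
      intro j hj
      rw [List.mem_reverse, List.mem_range] at hj
      rw [dif_pos hj]
    simp only [Function.comp_apply, rayOp, hl]
  rw [hfac]
  exact (continuous_of_discreteTopology).comp (continuous_pi fun i => continuous_apply (i : ℕ))

lemma continuous_rayOp_apply_norm (p : ℕ → Bool) (k : ℕ) :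
    Continuous fun ξ : H => ‖rayOp A B p k ξ‖ :=
  ((rayOp A B p k).continuous).norm

lemma rayOp_of_word (w : List Bool) {k : ℕ} (hk : k ≤ w.length) :
    rayOp A B (fun i => w.getD (w.length - 1 - i) false) k
      = pythWord A B (w.drop (w.length - k)) := by
  rw [rayOp]
  congr 1
  apply List.ext_getElem
  · simp
    omega
  · intro i h1 h2
    have hik : i < k := by simpa using h1
    rw [List.getElem_map, List.getElem_reverse, List.getElem_drop]
    simp only [List.length_range, List.getElem_range]
    rw [List.getD_eq_getElem w false (by omega : w.length - 1 - (k - 1 - i) < w.length)]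
    simp only [show w.length - 1 - (k - 1 - i) = w.length - k + i from by omega]

section contraction3

variable {A B}
variable (hA : ∀ ξ : H, ‖A ξ‖ ≤ ‖ξ‖) (hB : ∀ ξ : H, ‖B ξ‖ ≤ ‖ξ‖)
include hA hB

lemma norm_pythWord_drop_le (w : List Bool) (m : ℕ) :
    ‖pythWord A B w‖ ≤ ‖pythWord A B (w.drop m)‖ := by
  conv_lhs => rw [← List.take_append_drop m w]
  rw [pythWord_append]
  calc ‖pythWord A B (w.take m) * pythWord A B (w.drop m)‖
      ≤ ‖pythWord A B (w.take m)‖ * ‖pythWord A B (w.drop m)‖ := norm_mul_le _ _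
    _ ≤ 1 * ‖pythWord A B (w.drop m)‖ := by
        have := norm_pythWord_le_one hA hB (A := A) (B := B) (w.take m)
        have := norm_nonneg (pythWord A B (w.drop m))
        nlinarith
    _ = ‖pythWord A B (w.drop m)‖ := one_mul _

lemma exists_ray {ε : ℝ} (hinf : {w : List Bool | ε ≤ ‖pythWord A B w‖}.Infinite) :
    ∃ p : ℕ → Bool, ∀ k, ε ≤ ‖rayOp A B p k‖ := by
  set F : ℕ → Set (ℕ → Bool) :=
    fun n => ⋂ (k : ℕ) (_ : k ≤ n), {p : ℕ → Bool | ε ≤ ‖rayOp A B p k‖} with hF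
  have hFmem : ∀ n (p : ℕ → Bool), p ∈ F n ↔ ∀ k ≤ n, ε ≤ ‖rayOp A B p k‖ := by
    intro n p; simp [hF]
  have hclosed : ∀ n, IsClosed (F n) := fun n =>
    isClosed_iInter fun k => isClosed_iInter fun _ =>
      isClosed_le continuous_const (continuous_rayOp_norm A B k)
  have hne : ∀ n, (F n).Nonempty := by
    intro n
    have hw : ∃ w : List Bool, ε ≤ ‖pythWord A B w‖ ∧ n ≤ w.length := by
      by_contra hc
      push_neg at hc
      exact hinf ((List.finite_length_lt Bool n).subset fun w hw => hc w hw)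
    obtain ⟨w, hw1, hw2⟩ := hw
    refine ⟨fun i => w.getD (w.length - 1 - i) false, (hFmem n _).mpr fun k hk => ?_⟩
    rw [rayOp_of_word A B w (hk.trans hw2)]
    exact hw1.trans (norm_pythWord_drop_le hA hB w _)
  have hdec : ∀ n, F (n+1) ⊆ F n := by
    intro n p hp
    rw [hFmem] at hp ⊢
    exact fun k hk => hp k (hk.trans (Nat.le_succ n))
  have hcpt : IsCompact (F 0) := (hclosed 0).isCompact
  obtain ⟨p, hp⟩ := IsCompact.nonempty_iInter_of_sequence_nonempty_isCompact_isClosed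
    F hdec hne hcpt hclosed
  refine ⟨p, fun k => ?_⟩
  have := Set.mem_iInter.mp hp k
  exact (hFmem k p).mp this k le_rfl

lemma exists_unit_vector {ε : ℝ} (hε : 0 < ε) (p : ℕ → Bool)
    [FiniteDimensional ℂ H]
    (hp : ∀ k, ε ≤ ‖rayOp A B p k‖) :
    ∃ ξ : H, ‖ξ‖ = 1 ∧ ∀ k, ε/2 ≤ ‖rayOp A B p k ξ‖ := by
  set K : ℕ → Set H :=
    fun n => {ξ : H | ‖ξ‖ = 1} ∩ ⋂ (k : ℕ) (_ : k ≤ n),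
      {ξ : H | ε/2 ≤ ‖rayOp A B p k ξ‖} with hK
  have hKmem : ∀ n (ξ : H), ξ ∈ K n ↔ ‖ξ‖ = 1 ∧ ∀ k ≤ n, ε/2 ≤ ‖rayOp A B p k ξ‖ := by
    intro n ξ; simp [hK]
  have hclosed : ∀ n, IsClosed (K n) := fun n =>
    (isClosed_eq continuous_norm continuous_const).inter
      (isClosed_iInter fun k => isClosed_iInter fun _ =>
        isClosed_le continuous_const (continuous_rayOp_apply_norm A B p k))
  have hne : ∀ n, (K n).Nonempty := by
    intro n
    have hnb : ¬ ∀ ξ : H, ‖rayOp A B p n ξ‖ ≤ (ε/2) * ‖ξ‖ := by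
      intro h
      have := ContinuousLinearMap.opNorm_le_bound (rayOp A B p n) (by positivity) h
      linarith [hp n]
    push_neg at hnb
    obtain ⟨ξ, hξ⟩ := hnb
    have hξ0 : ξ ≠ 0 := by
      rintro rfl
      simp at hξ
    set u : H := (‖ξ‖⁻¹ : ℂ) • ξ with hu
    have hun : ‖u‖ = 1 := norm_smul_inv_norm hξ0
    have hξpos : (0:ℝ) < ‖ξ‖ := norm_pos_iff.mpr hξ0
    have hTu : ε/2 ≤ ‖rayOp A B p n u‖ := by
      rw [hu, map_smul, norm_smul]
      have hn : ‖(‖ξ‖⁻¹ : ℂ)‖ = ‖ξ‖⁻¹ := by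
        rw [norm_inv]
        simp
      rw [hn]
      calc ε/2 = (ε/2 * ‖ξ‖) * ‖ξ‖⁻¹ := by field_simp
        _ ≤ ‖rayOp A B p n ξ‖ * ‖ξ‖⁻¹ :=
            mul_le_mul_of_nonneg_right hξ.le (by positivity)
        _ = ‖ξ‖⁻¹ * ‖rayOp A B p n ξ‖ := by ring
    refine ⟨u, (hKmem n u).mpr ⟨hun, fun k hk => ?_⟩⟩
    exact hTu.trans (rayOp_apply_antitone hA hB p u hk)
  have hdec : ∀ n, K (n+1) ⊆ K n := by
    intro n ξ hξ
    rw [hKmem] at hξ ⊢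
    exact ⟨hξ.1, fun k hk => hξ.2 k (hk.trans (Nat.le_succ n))⟩
  have hcpt : IsCompact (K 0) := by
    apply IsCompact.of_isClosed_subset (isCompact_sphere (0:H) 1) (hclosed 0)
    intro ξ hξ
    rw [mem_sphere_zero_iff_norm]
    exact ((hKmem 0 ξ).mp hξ).1
  obtain ⟨ξ, hξ⟩ := IsCompact.nonempty_iInter_of_sequence_nonempty_isCompact_isClosed
    K hdec hne hcpt hclosed
  refine ⟨ξ, ((hKmem 0 ξ).mp (Set.mem_iInter.mp hξ 0)).1, fun k => ?_⟩
  exact ((hKmem k ξ).mp (Set.mem_iInter.mp hξ k)).2 k le_rfl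

end contraction3


noncomputable def greedyVec (ξ₀ : H) : ℕ → H
  | 0 => ξ₀
  | n+1 =>
    if gSup A B (A (greedyVec ξ₀ n)) ≤ gSup A B (B (greedyVec ξ₀ n))
    then B (greedyVec ξ₀ n) else A (greedyVec ξ₀ n)

noncomputable def greedyRay (ξ₀ : H) (n : ℕ) : Bool :=
  decide (gSup A B (A (greedyVec A B ξ₀ n)) ≤ gSup A B (B (greedyVec A B ξ₀ n)))

lemma rayOp_greedy (ξ₀ : H) (n : ℕ) :
    rayOp A B (greedyRay A B ξ₀) n ξ₀ = greedyVec A B ξ₀ n := by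
  induction n with
  | zero => simp [rayOp_zero, greedyVec]
  | succ n ih =>
    rw [rayOp_succ]
    show (if greedyRay A B ξ₀ n then B else A) (rayOp A B (greedyRay A B ξ₀) n ξ₀) = _
    rw [ih, greedyRay]
    by_cases h : gSup A B (A (greedyVec A B ξ₀ n)) ≤ gSup A B (B (greedyVec A B ξ₀ n))
    · simp only [h, decide_eq_true_eq, if_true, decide_true]
      rw [show greedyVec A B ξ₀ (n+1) = B (greedyVec A B ξ₀ n) from by
        simp [greedyVec, h]]
    · simp only [h, decide_eq_true_eq, decide_false, Bool.false_eq_true, if_false]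
      rw [show greedyVec A B ξ₀ (n+1) = A (greedyVec A B ξ₀ n) from by
        simp [greedyVec, h]]

section greedy

variable {A B}
variable (hA : ∀ ξ : H, ‖A ξ‖ ≤ ‖ξ‖) (hB : ∀ ξ : H, ‖B ξ‖ ≤ ‖ξ‖)
include hA hB

lemma gSup_greedyVec (ξ₀ : H) (n : ℕ) :
    gSup A B (greedyVec A B ξ₀ n) = gSup A B ξ₀ := by
  induction n with
  | zero => rfl
  | succ n ih =>
    rw [← ih]
    by_cases h : gSup A B (A (greedyVec A B ξ₀ n)) ≤ gSup A B (B (greedyVec A B ξ₀ n))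
    · rw [show greedyVec A B ξ₀ (n+1) = B (greedyVec A B ξ₀ n) from by simp [greedyVec, h]]
      rw [gSup_eq_max hA hB (greedyVec A B ξ₀ n), max_eq_right h]
    · rw [show greedyVec A B ξ₀ (n+1) = A (greedyVec A B ξ₀ n) from by simp [greedyVec, h]]
      rw [gSup_eq_max hA hB (greedyVec A B ξ₀ n), max_eq_left (le_of_not_ge h)]

lemma norm_greedyVec_le (ξ₀ : H) (n : ℕ) : ‖greedyVec A B ξ₀ n‖ ≤ ‖ξ₀‖ := by
  induction n with
  | zero => exact le_refl _
  | succ n ih =>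
    by_cases h : gSup A B (A (greedyVec A B ξ₀ n)) ≤ gSup A B (B (greedyVec A B ξ₀ n))
    · rw [show greedyVec A B ξ₀ (n+1) = B (greedyVec A B ξ₀ n) from by simp [greedyVec, h]]
      exact (hB _).trans ih
    · rw [show greedyVec A B ξ₀ (n+1) = A (greedyVec A B ξ₀ n) from by simp [greedyVec, h]]
      exact (hA _).trans ih

end greedy

end PythAux

theorem pythagorean_pair_dichotomy_finite_dim
    {H : Type*} [NormedAddCommGroup H] [InnerProductSpace ℂ H]
    [FiniteDimensional ℂ H]
    (A B : H →L[ℂ] H)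
    (hpyth : (ContinuousLinearMap.adjoint A).comp A
      + (ContinuousLinearMap.adjoint B).comp B = 1) :
    (∀ ε : ℝ, 0 < ε → {w : List Bool | ε ≤ ‖pythWord A B w‖}.Finite) ∨
      ∃ ξ : H, ξ ≠ 0 ∧ ∃ p : ℕ → Bool, ∀ n, ‖rayOp A B p n ξ‖ = ‖ξ‖ := by
  classical
  rw [or_iff_not_imp_left]
  intro hL
  push_neg at hL
  obtain ⟨ε, hε, hinf⟩ := hL
  have hA := PythAux.pyth_contraction_left hpyth
  have hB := PythAux.pyth_contraction_right hpyth
  obtain ⟨p₀, hp₀⟩ := PythAux.exists_ray hA hB hinf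
  obtain ⟨ξs, hξs1, hξs2⟩ := PythAux.exists_unit_vector hA hB hε p₀ hp₀
  have hsne : (Metric.sphere (0:H) 1).Nonempty := ⟨ξs, by simp [hξs1]⟩
  obtain ⟨ξ₀, hξ₀s, hmax⟩ := (isCompact_sphere (0:H) 1).exists_isMaxOn hsne
    ((PythAux.continuous_gSup hA hB).continuousOn)
  have hξ₀n : ‖ξ₀‖ = 1 := mem_sphere_zero_iff_norm.mp hξ₀s
  have hmax' : ∀ η : H, ‖η‖ = 1 → PythAux.gSup A B η ≤ PythAux.gSup A B ξ₀ := fun η hη =>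
    hmax (mem_sphere_zero_iff_norm.mpr hη)
  have hMs : ε/2 ≤ PythAux.gSup A B ξs :=
    le_trans (PythAux.le_rInf A B p₀ ξs hξs2) (PythAux.rInf_le_gSup A B p₀ ξs)
  have hM : 0 < PythAux.gSup A B ξ₀ :=
    lt_of_lt_of_le (by linarith : (0:ℝ) < ε/2) (hMs.trans (hmax' ξs hξs1))
  have hnorm : ∀ n, ‖PythAux.greedyVec A B ξ₀ n‖ = 1 := by
    intro n
    have h1 : ‖PythAux.greedyVec A B ξ₀ n‖ ≤ 1 := by
      simpa [hξ₀n] using PythAux.norm_greedyVec_le hA hB ξ₀ n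
    have hg : PythAux.gSup A B (PythAux.greedyVec A B ξ₀ n) = PythAux.gSup A B ξ₀ :=
      PythAux.gSup_greedyVec hA hB ξ₀ n
    set v := PythAux.greedyVec A B ξ₀ n with hv
    have hv0 : v ≠ 0 := by
      intro h
      rw [h] at hg
      have h2 := PythAux.gSup_le_norm A B (0:H)
      rw [norm_zero] at h2
      linarith
    have hvpos : 0 < ‖v‖ := norm_pos_iff.mpr hv0
    have hsmul := PythAux.gSup_smul A B v (le_of_lt (inv_pos.mpr hvpos))
    have hu1 : ‖((‖v‖⁻¹ : ℝ) : ℂ) • v‖ = 1 := by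
      rw [norm_smul]
      have : ‖((‖v‖⁻¹ : ℝ) : ℂ)‖ = ‖v‖⁻¹ := by simp [abs_of_nonneg (inv_pos.mpr hvpos).le]
      rw [this]
      field_simp
    have h3 := hmax' _ hu1
    rw [hsmul, hg] at h3
    have h4 : 1 ≤ ‖v‖ := by
      nlinarith [mul_inv_cancel₀ (ne_of_gt hvpos)]
    linarith
  refine ⟨ξ₀, by rw [← norm_ne_zero_iff, hξ₀n]; norm_num, PythAux.greedyRay A B ξ₀, fun n => ?_⟩
  rw [PythAux.rayOp_greedy, hnorm n, hξ₀n]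
end

section
/- Let (A,B) be a Pythagorean pair on 𝔥 and let p, q be distinct rays. If ξ is contained in p and η is contained in q (i.e. ‖p_nξ‖=‖ξ‖ and ‖q_nη‖=‖η‖ for all n), then ξ and η are orthogonal: ⟨ξ, η⟩ = 0. -/
open Filter Topology

lemma rayOp_succ {H : Type*} [NormedAddCommGroup H] [InnerProductSpace ℂ H]
    (A B : H →L[ℂ] H) (p : ℕ → Bool) (n : ℕ) (x : H) :
    rayOp A B p (n+1) x = (if p n then B else A) (rayOp A B p n x) := by
  simp only [rayOp, pythWord, List.range_succ, List.reverse_append, List.map_append,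
    List.map_cons, List.prod_cons, List.map_nil, List.reverse_cons, List.reverse_nil,
    List.nil_append, List.singleton_append]
  rfl

theorem pythagorean_pair_contained_distinct_rays_orthogonal
    {H : Type*} [NormedAddCommGroup H] [InnerProductSpace ℂ H] [CompleteSpace H]
    (A B : H →L[ℂ] H)
    (hpyth : (ContinuousLinearMap.adjoint A).comp A
      + (ContinuousLinearMap.adjoint B).comp B = 1)
    (p q : ℕ → Bool) (hpq : p ≠ q) (ξ η : H)
    (hξ : ∀ n, ‖rayOp A B p n ξ‖ = ‖ξ‖)
    (hη : ∀ n, ‖rayOp A B q n η‖ = ‖η‖) :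
    (inner ℂ ξ η : ℂ) = 0 := by
  -- isometry identity
  have hisom : ∀ ζ ζ' : H, (inner ℂ (A ζ) (A ζ') : ℂ) + inner ℂ (B ζ) (B ζ') = inner ℂ ζ ζ' := by
    intro ζ ζ'
    have h1 : (inner ℂ ζ (((ContinuousLinearMap.adjoint A).comp A
        + (ContinuousLinearMap.adjoint B).comp B) ζ') : ℂ) = inner ℂ ζ ζ' := by
      rw [hpyth]; simp
    simpa [ContinuousLinearMap.add_apply, inner_add_right,
      ContinuousLinearMap.adjoint_inner_right] using h1
  have hnorm : ∀ ζ : H, ‖A ζ‖^2 + ‖B ζ‖^2 = ‖ζ‖^2 := by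
    intro ζ
    have := hisom ζ ζ
    rw [inner_self_eq_norm_sq_to_K, inner_self_eq_norm_sq_to_K, inner_self_eq_norm_sq_to_K] at this
    exact_mod_cast this
  -- kill lemmas
  have killB : ∀ ζ : H, ‖A ζ‖ = ‖ζ‖ → B ζ = 0 := by
    intro ζ h
    have := hnorm ζ
    rw [h] at this
    have : ‖B ζ‖^2 = 0 := by linarith
    simpa [pow_eq_zero_iff] using this
  have killA : ∀ ζ : H, ‖B ζ‖ = ‖ζ‖ → A ζ = 0 := by
    intro ζ h
    have := hnorm ζ
    rw [h] at this
    have : ‖A ζ‖^2 = 0 := by linarith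
    simpa [pow_eq_zero_iff] using this
  -- contained vectors: at step n, the "other" letter kills
  have hkillp : ∀ n, (if p n then A else B) (rayOp A B p n ξ) = 0 := by
    intro n
    have h1 := hξ n
    have h2 := hξ (n+1)
    rw [rayOp_succ] at h2
    cases hpn : p n with
    | false =>
      simp only [hpn] at h2 ⊢
      simp only [Bool.false_eq_true, if_false] at h2 ⊢
      exact killB _ (by rw [h2, h1])
    | true =>
      simp only [hpn, if_true] at h2 ⊢
      exact killA _ (by rw [h2, h1])
  have hkillq : ∀ n, (if q n then A else B) (rayOp A B q n η) = 0 := by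
    intro n
    have h1 := hη n
    have h2 := hη (n+1)
    rw [rayOp_succ] at h2
    cases hqn : q n with
    | false =>
      simp only [hqn] at h2 ⊢
      simp only [Bool.false_eq_true, if_false] at h2 ⊢
      exact killB _ (by rw [h2, h1])
    | true =>
      simp only [hqn, if_true] at h2 ⊢
      exact killA _ (by rw [h2, h1])
  -- main induction: while p and q agree, inner product is preserved
  have main : ∀ n, (∀ k < n, p k = q k) →
      (inner ℂ (rayOp A B p n ξ) (rayOp A B q n η) : ℂ) = inner ℂ ξ η := by
    intro n
    induction n with
    | zero => intro _; simp [rayOp, pythWord]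
    | succ n ih =>
      intro hagree
      have hih := ih (fun k hk => hagree k (Nat.lt_succ_of_lt hk))
      have hpn : p n = q n := hagree n (Nat.lt_succ_self n)
      rw [rayOp_succ, rayOp_succ, hpn]
      have hstep := hisom (rayOp A B p n ξ) (rayOp A B q n η)
      cases hqn : q n with
      | false =>
        have hz : B (rayOp A B p n ξ) = 0 := by
          have := hkillp n; rw [hpn, hqn] at this; simpa using this
        rw [hz, inner_zero_left, add_zero] at hstep
        simpa using hstep.trans hih
      | true =>
        have hz : A (rayOp A B p n ξ) = 0 := by
          have := hkillp n; rw [hpn, hqn] at this; simpa using this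
        rw [hz, inner_zero_left, zero_add] at hstep
        simpa using hstep.trans hih
  -- first index of disagreement
  have hex : ∃ n, p n ≠ q n := Function.ne_iff.mp hpq
  set n := Nat.find hex with hn
  have hdiff : p n ≠ q n := Nat.find_spec hex
  have hagree : ∀ k < n, p k = q k := fun k hk => by
    by_contra h; exact Nat.find_min hex hk h
  have hmain := main n hagree
  rw [← hmain]
  have hstep := hisom (rayOp A B p n ξ) (rayOp A B q n η)
  cases hpn : p n with
  | false =>
    have hqn : q n = true := by
      cases hq : q n with
      | false => exact absurd (hpn.trans hq.symm) hdiff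
      | true => rfl
    have hz1 : B (rayOp A B p n ξ) = 0 := by
      have := hkillp n; rw [hpn] at this; simpa using this
    have hz2 : A (rayOp A B q n η) = 0 := by
      have := hkillq n; rw [hqn] at this; simpa using this
    rw [← hstep, hz1, hz2, inner_zero_left, inner_zero_right, add_zero]
  | true =>
    have hqn : q n = false := by
      cases hq : q n with
      | false => rfl
      | true => exact absurd (hpn.trans hq.symm) hdiff
    have hz1 : A (rayOp A B p n ξ) = 0 := by
      have := hkillp n; rw [hpn] at this; simpa using this
    have hz2 : B (rayOp A B q n η) = 0 := by
      have := hkillq n; rw [hqn] at this; simpa using this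
    rw [← hstep, hz1, hz2, inner_zero_left, inner_zero_right, zero_add]
end
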